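/- The join of two pack-good congruences on (ℕ⁺)* is a pack-good congruence: if ~ and ≈ are pack-good congruences, then the smallest monoid congruence containing both ~ and ≈ (the transitive closure of their union) is a pack-congruence and is compatible with restriction to alphabet intervals. -/

import Mathlib

open scoped Classical

/-- Words over the positive integers. -/
abbrev Word : Type := List ℕ+

/-- Evaluation of a word: number of occurrences of each letter. -/
def ev (w : Word) : ℕ+ → ℕ := fun a => w.count a

/-- A monoid congruence on the free monoid `(ℕ⁺)*`. -/
def IsCongruence (r : Word → Word → Prop) : Prop :=
  Equivalence r ∧ ∀ u v u' v', r u v → r u' v' → r (u ++ u') (v ++ v')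

/-- Restriction of a word to the letters belonging to a set `I`. -/
noncomputable def restrictTo (I : Set ℕ+) (w : Word) : Word :=
  w.filter fun a => decide (a ∈ I)

/-- `I` is an interval (order-convex subset) of `ℕ⁺`. -/
def IsIntervalSet (I : Set ℕ+) : Prop :=
  ∀ ⦃a b c : ℕ+⦄, a ∈ I → c ∈ I → a ≤ b → b ≤ c → b ∈ I

/-- Compatibility with restriction to alphabet intervals. -/
def CompatRestrict (r : Word → Word → Prop) : Prop :=
  ∀ I : Set ℕ+, IsIntervalSet I → ∀ u v, r u v → r (restrictTo I u) (restrictTo I v)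

/-- `r` is a `φ`-congruence. -/
def IsPhiCongruence (φ : Word → Word) (r : Word → Word → Prop) : Prop :=
  ∀ u v, r u v ↔ (r (φ u) (φ v) ∧ ev u = ev v)

/-- Standardization. -/
def std (w : Word) : Word :=
  (List.range w.length).map fun i =>
    ⟨((List.range w.length).countP fun j =>
        decide (w.getD j 1 < w.getD i 1 ∨ (w.getD j 1 = w.getD i 1 ∧ j < i))) + 1,
      Nat.succ_pos _⟩

/-- Packing. -/
def pack (w : Word) : Word :=
  w.map fun a => ⟨(w.dedup.countP fun b => decide (b < a)) + 1, Nat.succ_pos _⟩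

theorem parkBad_ex (w : Word) :
    ∃ d : ℕ, 1 ≤ d ∧ (w.countP fun a : ℕ+ => decide ((a : ℕ) ≤ d)) < d :=
  ⟨w.length + 1, Nat.succ_le_succ (Nat.zero_le _), by
    have h : (w.countP fun a : ℕ+ => decide ((a : ℕ) ≤ w.length + 1)) ≤ w.length :=
      List.countP_le_length
    omega⟩

/-- The smallest `d ≥ 1` such that fewer than `d` letters of `w` are `≤ d`. -/
noncomputable def parkBad (w : Word) : ℕ := Nat.find (parkBad_ex w)

/-- One pass of the parkization procedure, with fuel. -/
noncomputable def parkAux : ℕ → Word → Word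
  | 0, w => w
  | f + 1, w =>
    if parkBad w ≤ w.length then
      parkAux f (w.map fun a : ℕ+ => if parkBad w < (a : ℕ) then (a - 1 : ℕ+) else a)
    else w

/-- Parkization. The fuel `(sum of the letters)` always suffices,
since every pass strictly decreases the sum of the letters. -/
noncomputable def park (w : Word) : Word := parkAux (w.map fun a => (a : ℕ)).sum w

/-- Smallest monoid congruence containing `base`. -/
def CongClosure (base : Word → Word → Prop) (u v : Word) : Prop :=
  ∀ r : Word → Word → Prop, IsCongruence r → (∀ x y, base x y → r x y) → r u v

def sylvBase (x y : Word) : Prop :=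
  ∃ (a b c : ℕ+) (v : Word), a ≤ b ∧ b < c ∧
    x = a :: c :: (v ++ [b]) ∧ y = c :: a :: (v ++ [b])

/-- The sylvester congruence. -/
def sylv : Word → Word → Prop := CongClosure sylvBase

def stalBase (x y : Word) : Prop :=
  ∃ (a b : ℕ+) (v : Word), x = b :: a :: (v ++ [b]) ∧ y = a :: b :: (v ++ [b])

/-- The stalactic congruence. -/
def stal : Word → Word → Prop := CongClosure stalBase

def sylvSharpBase (x y : Word) : Prop :=
  ∃ (a b c : ℕ+) (v : Word), a < b ∧ b ≤ c ∧
    x = b :: (v ++ [a, c]) ∧ y = b :: (v ++ [c, a])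

/-- The #-sylvester congruence. -/
def sylvSharp : Word → Word → Prop := CongClosure sylvSharpBase

/-- The taïga congruence: join of the sylvester and stalactic congruences. -/
def taiga : Word → Word → Prop := CongClosure fun u v => sylv u v ∨ stal u v

/-- Planar binary trees with letter labels. -/
inductive BT : Type where
  | leaf : BT
  | node : BT → ℕ+ → BT → BT
deriving DecidableEq

/-- Binary search tree insertion of a letter. -/
def BT.insert : BT → ℕ+ → BT
  | .leaf, l => .node .leaf l .leaf
  | .node L b R, l => if l ≤ b then .node (L.insert l) b R else .node L b (R.insert l)

/-- Binary search tree of a word: insert the letters from right to left. -/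
def bst (w : Word) : BT := w.foldr (fun l t => t.insert l) .leaf

/-- Planar binary trees labelled by a letter and a multiplicity. -/
inductive BSTM : Type where
  | leaf : BSTM
  | node : BSTM → ℕ+ → ℕ+ → BSTM → BSTM   -- left, letter, multiplicity, right
deriving DecidableEq

/-- Insertion of a letter into a binary search tree with multiplicities. -/
def BSTM.insert : BSTM → ℕ+ → BSTM
  | .leaf, l => .node .leaf l 1 .leaf
  | .node L l' k R, l =>
    if l = l' then .node L l' (k + 1) R
    else if l < l' then .node (L.insert l) l' k R
    else .node L l' k (R.insert l)

/-- The `P`-symbol: insert the letters of `w` from right to left. -/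
def Pmap (w : Word) : BSTM := w.foldr (fun l t => t.insert l) .leaf

/-- Letters of a BSTM in left-to-right (infix) order. -/
def BSTM.letters : BSTM → List ℕ+
  | .leaf => []
  | .node L l _ R => L.letters ++ l :: R.letters

/-- The binary search tree property for a BSTM. -/
def BSTM.IsSearchTree : BSTM → Prop
  | .leaf => True
  | .node L l _ R =>
      (∀ x ∈ L.letters, x < l) ∧ (∀ x ∈ R.letters, l < x) ∧
        L.IsSearchTree ∧ R.IsSearchTree

/-- Total multiplicity of a letter in a BSTM. -/
def BSTM.mult : BSTM → ℕ+ → ℕ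
  | .leaf, _ => 0
  | .node L l k R, a => L.mult a + (if a = l then (k : ℕ) else 0) + R.mult a

/-- Size of a BSTM: sum of the multiplicities. -/
def BSTM.size : BSTM → ℕ
  | .leaf => 0
  | .node L _ k R => L.size + (k : ℕ) + R.size

/-- Planar binary trees with multiplicities. -/
inductive BTM : Type where
  | leaf : BTM
  | node : BTM → ℕ+ → BTM → BTM
deriving DecidableEq

/-- Size of a BTM: sum of the multiplicities. -/
def BTM.size : BTM → ℕ
  | .leaf => 0
  | .node L k R => L.size + (k : ℕ) + R.size

/-- Number of nodes of a BTM. -/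
def BTM.numNodes : BTM → ℕ
  | .leaf => 0
  | .node L _ R => L.numNodes + 1 + R.numNodes

/-- Forgetting the letters of a BSTM gives a BTM. -/
def forgetLetters : BSTM → BTM
  | .leaf => .leaf
  | .node L _ k R => .node (forgetLetters L) k (forgetLetters R)

/-- The `B`-symbol: the BTM underlying `P(w)`. -/
def Bmap (w : Word) : BTM := forgetLetters (Pmap w)

/-- A packed word: its set of letters is `{1, …, k}` for some `k`. -/
def IsPacked (w : Word) : Prop := ∀ a ∈ w, ∀ b : ℕ+, b ≤ a → b ∈ w

/-- Number of packed words inserting to the BTM `T`. -/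
noncomputable def fT (T : BTM) : ℕ :=
  Set.ncard {w : Word | IsPacked w ∧ Bmap w = T}

/-- The hook-type product over the subtrees of a BTM. -/
def hookProd : BTM → ℕ
  | .leaf => 1
  | .node L k R =>
      (BTM.node L k R).size * ((k : ℕ) - 1).factorial * hookProd L * hookProd R

/-- Label the nodes of a BTM in infix order starting from a given letter;
returns the labelled tree and the next unused letter. -/
def infixLabelAux : BTM → ℕ+ → BSTM × ℕ+
  | .leaf, n => (.leaf, n)
  | .node L k R, n =>
    let p := infixLabelAux L n
    let q := infixLabelAux R (p.2 + 1)
    (.node p.1 p.2 k q.1, q.2)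

/-- Label the nodes of a BTM by `1, …, k` in infix order. -/
def infixLabel (T : BTM) : BSTM := (infixLabelAux T 1).1

lemma ev_eq_iff_perm {x y : Word} : ev x = ev y ↔ x.Perm y := by
  rw [List.perm_iff_count]
  exact ⟨fun h a => congrFun h a, fun h => funext h⟩

lemma dedup_map_of_injective {f : ℕ+ → ℕ+} (hf : Function.Injective f) (l : Word) :
    (l.map f).dedup = l.dedup.map f := by
  induction l with
  | nil => simp
  | cons a l ih =>
    by_cases ha : a ∈ l
    · rw [List.map_cons, List.dedup_cons_of_mem (List.mem_map_of_mem (f := f) ha),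
        List.dedup_cons_of_mem ha, ih]
    · have : f a ∉ l.map f := by
        simp only [List.mem_map, not_exists]
        rintro x ⟨hx, hfx⟩
        exact ha (hf hfx ▸ hx)
      rw [List.map_cons, List.dedup_cons_of_notMem this,
        List.dedup_cons_of_notMem ha, List.map_cons, ih]

lemma pack_map_strictMono {f : ℕ+ → ℕ+} (hf : StrictMono f) (x : Word) :
    pack (x.map f) = pack x := by
  unfold pack
  erw [List.map_map]
  apply List.map_congr_left
  intro a _
  apply Subtype.ext
  show ((x.map f).dedup.countP fun b => decide (b < f a)) + 1
      = (x.dedup.countP fun b => decide (b < a)) + 1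
  rw [dedup_map_of_injective hf.injective, List.countP_map]
  congr 1
  apply List.countP_congr
  intro b _
  simp [Function.comp, hf.lt_iff_lt]

lemma sorted_rank {L : Word} (hL : L.Pairwise (· < ·)) {a : ℕ+} (ha : a ∈ L) :
    (L.countP fun b => decide (b < a)) < L.length ∧
      L.getD (L.countP fun b => decide (b < a)) 1 = a := by
  induction L with
  | nil => simp at ha
  | cons x L ih =>
    have hx : ∀ y ∈ L, x < y := (List.pairwise_cons.mp hL).1
    have hL' : L.Pairwise (· < ·) := (List.pairwise_cons.mp hL).2
    rcases List.mem_cons.mp ha with rfl | haL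
    · have hz : ((a :: L).countP fun b => decide (b < a)) = 0 := by
        rw [List.countP_eq_zero]
        intro b hb
        rcases List.mem_cons.mp hb with rfl | hbL
        · simp
        · simpa using not_lt_of_gt (hx b hbL)
      rw [hz]
      simp
    · have hxa : x < a := hx a haL
      have hc : ((x :: L).countP fun b => decide (b < a)) =
          (L.countP fun b => decide (b < a)) + 1 := by
        rw [List.countP_cons_of_pos (by simpa using hxa)]
      obtain ⟨h1, h2⟩ := ih hL' haL
      rw [hc]
      exact ⟨by simpa using Nat.succ_lt_succ h1, by simpa using h2⟩

lemma exists_unpack (u v : Word) (hperm : u.Perm v) :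
    ∃ f : ℕ+ → ℕ+, StrictMono f ∧ (pack u).map f = u ∧ (pack v).map f = v := by
  classical
  set L : Word := u.toFinset.sort (· ≤ ·) with hLdef
  have hsort : L.Pairwise (· < ·) := List.sortedLT_iff_pairwise.mp (Finset.sortedLT_sort _)
  have hnodupL : L.Nodup := Finset.sort_nodup _ _
  have hmemL : ∀ a : ℕ+, a ∈ L ↔ a ∈ u := by
    intro a; rw [hLdef, Finset.mem_sort, List.mem_toFinset]
  set M : ℕ := (u.toFinset.sup fun a => (a : ℕ)) + 1 with hMdef
  have hbound : ∀ a ∈ L, (a : ℕ) < M := by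
    intro a ha
    exact Nat.lt_succ_of_le (Finset.le_sup (f := fun a : ℕ+ => (a : ℕ))
      (List.mem_toFinset.mpr ((hmemL a).mp ha)))
  set f : ℕ+ → ℕ+ := fun j =>
    if (j : ℕ) ≤ L.length then L.getD ((j : ℕ) - 1) 1
    else Nat.toPNat ((j : ℕ) + M) (by positivity) with hfdef
  have hmono : StrictMono f := by
    intro j1 j2 hj
    have hj1pos : 1 ≤ (j1 : ℕ) := j1.one_le
    have hj2pos : 1 ≤ (j2 : ℕ) := j2.one_le
    have hjlt : (j1 : ℕ) < (j2 : ℕ) := hj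
    rw [hfdef]
    by_cases h1 : (j1 : ℕ) ≤ L.length
    · by_cases h2 : (j2 : ℕ) ≤ L.length
      · simp only [if_pos h1, if_pos h2]
        have hi1 : (j1 : ℕ) - 1 < L.length := by omega
        have hi2 : (j2 : ℕ) - 1 < L.length := by omega
        rw [List.getD_eq_getElem L 1 hi1, List.getD_eq_getElem L 1 hi2]
        exact List.pairwise_iff_getElem.mp hsort _ _ hi1 hi2 (by omega)
      · simp only [if_pos h1, if_neg h2]
        have hi1 : (j1 : ℕ) - 1 < L.length := by omega
        rw [List.getD_eq_getElem L 1 hi1]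
        have hm : L[(j1 : ℕ) - 1] ∈ L := List.getElem_mem _
        have := hbound _ hm
        have : (L[(j1 : ℕ) - 1] : ℕ) < (j2 : ℕ) + M := by omega
        exact this
    · by_cases h2 : (j2 : ℕ) ≤ L.length
      · omega
      · simp only [if_neg h1, if_neg h2]
        have : (j1 : ℕ) + M < (j2 : ℕ) + M := by omega
        exact this
  have key : ∀ w : Word, w.dedup.Perm L → (pack w).map f = w := by
    intro w hwL
    unfold pack
    erw [List.map_map]
    have : ∀ a ∈ w, (f ∘ fun a : ℕ+ =>
        (⟨(w.dedup.countP fun b => decide (b < a)) + 1, Nat.succ_pos _⟩ : ℕ+)) a = a := by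
      intro a haw
      have haL : a ∈ L := by
        rw [← List.Perm.mem_iff hwL, List.mem_dedup]; exact haw
      have hcc : (w.dedup.countP fun b => decide (b < a)) =
          (L.countP fun b => decide (b < a)) := hwL.countP_eq _
      obtain ⟨hlt, hget⟩ := sorted_rank hsort haL
      show (if ((w.dedup.countP fun b => decide (b < a)) + 1 : ℕ) ≤ L.length then
          L.getD ((w.dedup.countP fun b => decide (b < a)) + 1 - 1) 1 else
          Nat.toPNat (((w.dedup.countP fun b => decide (b < a)) + 1 : ℕ) + M) (by positivity)) = a
      have hle : ((⟨(w.dedup.countP fun b => decide (b < a)) + 1, Nat.succ_pos _⟩ : ℕ+) : ℕ)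
          ≤ L.length := by
        show (w.dedup.countP fun b => decide (b < a)) + 1 ≤ L.length
        omega
      split
      · show L.getD ((w.dedup.countP fun b => decide (b < a)) + 1 - 1) 1 = a
        rw [Nat.add_sub_cancel, hcc]
        exact hget
      · exact absurd hle (by assumption)
    calc w.map _ = w.map id := List.map_congr_left this
    _ = w := List.map_id w
  have hu : u.dedup.Perm L :=
    (List.perm_ext_iff_of_nodup (List.nodup_dedup u) hnodupL).mpr
      (fun a => by rw [List.mem_dedup, ← hmemL])
  exact ⟨f, hmono, key u hu, key v ((hperm.symm.dedup).trans hu)⟩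

section JoinAux

variable {r s : Word → Word → Prop}

lemma rtg_congruence (hrc : IsCongruence r) (hsc : IsCongruence s) :
    IsCongruence (Relation.ReflTransGen fun u v => r u v ∨ s u v) := by
  set R : Word → Word → Prop := fun u v => r u v ∨ s u v with hR
  have hsymm : ∀ u v, R u v → R v u := by
    rintro u v (h | h)
    · exact Or.inl (hrc.1.symm h)
    · exact Or.inr (hsc.1.symm h)
  refine ⟨⟨fun u => .refl, ?_, fun h h' => h.trans h'⟩, ?_⟩
  · intro u v h
    induction h with
    | refl => exact .refl
    | tail _ h2 ih => exact (Relation.ReflTransGen.single (hsymm _ _ h2)).trans ih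
  · intro u v u' v' h h'
    have h1 : Relation.ReflTransGen R (u ++ u') (v ++ u') := by
      refine Relation.ReflTransGen.lift (· ++ u') ?_ _ _ h
      rintro a b (hab | hab)
      · exact Or.inl (hrc.2 _ _ _ _ hab (hrc.1.refl u'))
      · exact Or.inr (hsc.2 _ _ _ _ hab (hsc.1.refl u'))
    have h2 : Relation.ReflTransGen R (v ++ u') (v ++ v') := by
      refine Relation.ReflTransGen.lift (v ++ ·) ?_ _ _ h'
      rintro a b (hab | hab)
      · exact Or.inl (hrc.2 _ _ _ _ (hrc.1.refl v) hab)
      · exact Or.inr (hsc.2 _ _ _ _ (hsc.1.refl v) hab)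
    exact h1.trans h2

lemma congClosure_eq_rtg (hrc : IsCongruence r) (hsc : IsCongruence s) (u v : Word) :
    CongClosure (fun u v => r u v ∨ s u v) u v ↔
      Relation.ReflTransGen (fun u v => r u v ∨ s u v) u v := by
  constructor
  · intro h
    exact h _ (rtg_congruence hrc hsc) (fun x y hxy => Relation.ReflTransGen.single hxy)
  · intro h t ht hbase
    induction h with
    | refl => exact ht.1.refl u
    | tail _ h2 ih => exact ht.1.trans ih (hbase _ _ h2)

end JoinAux

theorem join_of_packGood_congruences (r s : Word → Word → Prop)
    (hrc : IsCongruence r) (hrφ : IsPhiCongruence pack r) (hrI : CompatRestrict r)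
    (hsc : IsCongruence s) (hsφ : IsPhiCongruence pack s) (hsI : CompatRestrict s) :
    IsCongruence (CongClosure fun u v => r u v ∨ s u v) ∧
      IsPhiCongruence pack (CongClosure fun u v => r u v ∨ s u v) ∧
      CompatRestrict (CongClosure fun u v => r u v ∨ s u v) := by
  have hiff := congClosure_eq_rtg hrc hsc
  have hc := rtg_congruence hrc hsc
  have hevstep : ∀ a b : Word, (r a b ∨ s a b) → ev a = ev b := by
    rintro a b (hab | hab)
    · exact ((hrφ a b).mp hab).2
    · exact ((hsφ a b).mp hab).2
  refine ⟨?_, ?_, ?_⟩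
  · exact ⟨⟨fun u => (hiff u u).mpr (hc.1.refl u),
      fun h => (hiff _ _).mpr (hc.1.symm ((hiff _ _).mp h)),
      fun h h' => (hiff _ _).mpr (hc.1.trans ((hiff _ _).mp h) ((hiff _ _).mp h'))⟩,
      fun u v u' v' h h' =>
        (hiff _ _).mpr (hc.2 _ _ _ _ ((hiff _ _).mp h) ((hiff _ _).mp h'))⟩
  · intro u v
    constructor
    · intro h
      have h' := (hiff _ _).mp h
      constructor
      · apply (hiff _ _).mpr
        refine Relation.ReflTransGen.lift pack ?_ _ _ h'
        rintro a b (hab | hab)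
        · exact Or.inl ((hrφ a b).mp hab).1
        · exact Or.inr ((hsφ a b).mp hab).1
      · clear h
        induction h' with
        | refl => rfl
        | tail _ h2 ih => exact ih.trans (hevstep _ _ h2)
    · rintro ⟨hp, hev⟩
      obtain ⟨f, hf, hu, hv⟩ := exists_unpack u v (ev_eq_iff_perm.mp hev)
      have hp' := (hiff _ _).mp hp
      have hstep : ∀ a b : Word, (r a b ∨ s a b) →
          (r (a.map f) (b.map f) ∨ s (a.map f) (b.map f)) := by
        rintro a b (hab | hab)
        · obtain ⟨h1, h2⟩ := (hrφ a b).mp hab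
          refine Or.inl ((hrφ _ _).mpr ⟨?_, ?_⟩)
          · rw [pack_map_strictMono hf, pack_map_strictMono hf]; exact h1
          · exact ev_eq_iff_perm.mpr ((ev_eq_iff_perm.mp h2).map f)
        · obtain ⟨h1, h2⟩ := (hsφ a b).mp hab
          refine Or.inr ((hsφ _ _).mpr ⟨?_, ?_⟩)
          · rw [pack_map_strictMono hf, pack_map_strictMono hf]; exact h1
          · exact ev_eq_iff_perm.mpr ((ev_eq_iff_perm.mp h2).map f)
      have hlift : Relation.ReflTransGen (fun u v : Word => r u v ∨ s u v)
          ((pack u).map f) ((pack v).map f) := Relation.ReflTransGen.lift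
        (p := fun u v : Word => r u v ∨ s u v) (List.map f) hstep _ _ hp'
      rw [hu, hv] at hlift
      exact (hiff _ _).mpr hlift
  · intro I hI u v h
    intro t ht hbase
    have happ : ∀ x y : Word, restrictTo I (x ++ y) = restrictTo I x ++ restrictTo I y := by
      intro x y; simp [restrictTo]
    refine h (fun x y => t (restrictTo I x) (restrictTo I y))
      ⟨⟨fun u => ht.1.refl _, fun h => ht.1.symm h, fun h h' => ht.1.trans h h'⟩, ?_⟩ ?_
    · intro u v u' v' h h'
      rw [happ, happ]
      exact ht.2 _ _ _ _ h h'
    · rintro x y (hxy | hxy)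
      · exact hbase _ _ (Or.inl (hrI I hI x y hxy))
      · exact hbase _ _ (Or.inr (hsI I hI x y hxy))
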